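/- Let G be a real n1×k matrix with columns g_1,…,g_k and H a real k×n2 matrix with rows h_1,…,h_k. Then rank(GH) ≤ the maximum cardinality of a jointly independent index set of (G, H) (taken to be 0 if none exists). In particular this gives a tighter upper bound on rank(GH) than min{rank G, rank H}. -/

import Mathlib

open Matrix BigOperators

namespace StructCtrl

/-- A general linearly parameterized `n1 × n2` matrix `M(p) = ∑ k, p k • (g k * h k)`,
with columns `g k` and rows `h k`. -/
noncomputable def paramMat {q n1 n2 : ℕ} (g : Fin q → Fin n1 → ℝ) (h : Fin q → Fin n2 → ℝ)
    (p : Fin q → ℝ) : Matrix (Fin n1) (Fin n2) ℝ :=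
  Matrix.of fun i j => ∑ k : Fin q, p k * (g k i * h k j)

/-- Generic rank: the maximum over `p ∈ ℝ^q` of the rank of `M(p)`. -/
noncomputable def genericRank {q n1 n2 : ℕ} (g : Fin q → Fin n1 → ℝ)
    (h : Fin q → Fin n2 → ℝ) : ℕ :=
  ⨆ p : Fin q → ℝ, (paramMat g h p).rank

/-- `A(p)`: the `n × n` matrix of the first `n` columns of `[A(p) B(p)]`. -/
noncomputable def Amat {n m q : ℕ} (g : Fin q → Fin n → ℝ) (h : Fin q → Fin (n + m) → ℝ)
    (p : Fin q → ℝ) : Matrix (Fin n) (Fin n) ℝ :=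
  Matrix.of fun i j => paramMat g h p i (Fin.castAdd m j)

/-- `B(p)`: the `n × m` matrix of the last `m` columns of `[A(p) B(p)]`. -/
noncomputable def Bmat {n m q : ℕ} (g : Fin q → Fin n → ℝ) (h : Fin q → Fin (n + m) → ℝ)
    (p : Fin q → ℝ) : Matrix (Fin n) (Fin m) ℝ :=
  Matrix.of fun i j => paramMat g h p i (Fin.natAdd n j)

/-- Controllability matrix `[B  AB  …  A^{n-1}B]` (columns indexed by `Fin n × Fin m`). -/
noncomputable def ctrbMat {n m : ℕ} (A : Matrix (Fin n) (Fin n) ℝ)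
    (B : Matrix (Fin n) (Fin m) ℝ) : Matrix (Fin n) (Fin n × Fin m) ℝ :=
  Matrix.of fun i kj => (A ^ (kj.1 : ℕ) * B) i kj.2

/-- `(A, B)` is structurally controllable: for some parameter value the controllability
matrix has full rank `n`. -/
def StructurallyControllable {n m q : ℕ} (g : Fin q → Fin n → ℝ)
    (h : Fin q → Fin (n + m) → ℝ) : Prop :=
  ∃ p : Fin q → ℝ, (ctrbMat (Amat g h p) (Bmat g h p)).rank = n

/-- The binary assumption: all entries of every `g k` and every `h k` are `0` or `1`. -/
def BinaryAssumption {n m q : ℕ} (g : Fin q → Fin n → ℝ)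
    (h : Fin q → Fin (n + m) → ℝ) : Prop :=
  (∀ k i, g k i = 0 ∨ g k i = 1) ∧ (∀ k j, h k j = 0 ∨ h k j = 1)

/-- The unitary assumption: every `g k` and every `h k` is a standard unit vector, and the
pairs `(g k, h k)` are pairwise distinct. -/
def UnitaryAssumption {n m q : ℕ} (g : Fin q → Fin n → ℝ)
    (h : Fin q → Fin (n + m) → ℝ) : Prop :=
  (∀ k, ∃ i : Fin n, g k = Pi.single i 1) ∧
  (∀ k, ∃ j : Fin (n + m), h k = Pi.single j 1) ∧
  (∀ k k', k ≠ k' → (g k, h k) ≠ (g k', h k'))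

/-- `(A, B)` is reducible: some simultaneous permutation of the states puts the pair,
for all parameter values, in block-triangular form with a zero top-right `n1 × (n - n1)`
block of `A` and a zero top `n1 × m` block of `B`, where `1 ≤ n1 < n`. -/
def Reducible {n m q : ℕ} (g : Fin q → Fin n → ℝ) (h : Fin q → Fin (n + m) → ℝ) : Prop :=
  ∃ (σ : Equiv.Perm (Fin n)) (n1 : ℕ), 1 ≤ n1 ∧ n1 < n ∧ ∀ p : Fin q → ℝ,
    (∀ i j : Fin n, (i : ℕ) < n1 → n1 ≤ (j : ℕ) → Amat g h p (σ i) (σ j) = 0) ∧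
    (∀ i : Fin n, (i : ℕ) < n1 → ∀ jb : Fin m, Bmat g h p (σ i) jb = 0)

/-- `(A, B)` is irreducible. -/
def PairIrreducible {n m q : ℕ} (g : Fin q → Fin n → ℝ)
    (h : Fin q → Fin (n + m) → ℝ) : Prop :=
  ¬ Reducible g h

/-- Arc (of any color) of the graph `𝔾` of `(A, B)` from vertex `a` to vertex `b`:
`b` is a row-vertex `i` (one of the first `n` vertices) and the `(i, a)` entry of some
`g k * h k` is nonzero. -/
def HasArc {n m q : ℕ} (g : Fin q → Fin n → ℝ) (h : Fin q → Fin (n + m) → ℝ)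
    (a b : Fin (n + m)) : Prop :=
  ∃ (k : Fin q) (i : Fin n), b = Fin.castAdd m i ∧ g k i * h k a ≠ 0

/-- `𝔾` has a spanning forest rooted at the `m` input vertices `n+1, …, n+m`: every other
vertex is reachable from some input vertex by a directed path. -/
def HasSpanningForestAtInputs {n m q : ℕ} (g : Fin q → Fin n → ℝ)
    (h : Fin q → Fin (n + m) → ℝ) : Prop :=
  ∀ v : Fin (n + m), (¬ ∃ j : Fin m, Fin.natAdd n j = v) →
    ∃ j : Fin m, Relation.ReflTransGen (HasArc g h) (Fin.natAdd n j) v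

/-- A multi-colored subgraph of `𝔾`, encoded by the data of its `n` arcs: each of the
vertices `1, …, n` is the head of exactly one arc, with tail `t i` and color `c i`.
Injectivity of `t` and of `c` says no two arcs share a start vertex or a color (no two
share an end vertex by construction); such a spanning subgraph is exactly a disjoint union
of `m` directed path graphs (whose sources are the `m` input vertices) and directed cycle
graphs, with all arc colors distinct. -/
def IsMCS {n m q : ℕ} (g : Fin q → Fin n → ℝ) (h : Fin q → Fin (n + m) → ℝ)
    (t : Fin n → Fin (n + m)) (c : Fin n → Fin q) : Prop :=
  Function.Injective t ∧ Function.Injective c ∧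
    ∀ i : Fin n, g (c i) i * h (c i) (t i) ≠ 0

/-- A pure sink of the multi-colored subgraph with tail map `t`: a sink that is not a
source (i.e. has no outgoing arc, and is one of the first `n` vertices). -/
def IsPureSink {n m : ℕ} (t : Fin n → Fin (n + m)) (v : Fin (n + m)) : Prop :=
  (¬ ∃ i : Fin n, t i = v) ∧ ∃ i : Fin n, Fin.castAdd m i = v

/-- A pure source: a source (one of the last `m` vertices) that is not a sink. -/
def IsPureSource {n m : ℕ} (t : Fin n → Fin (n + m)) (v : Fin (n + m)) : Prop :=
  (∃ i : Fin n, t i = v) ∧ ∃ j : Fin m, Fin.natAdd n j = v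

/-- A matrimonial partition, encoded by a permutation `μ` that matches each pure sink with
a distinct pure source (the two-element cells are the pairs `{v, μ v}` for `v` a pure sink;
all other vertices lie in singleton cells). -/
def IsMatrimonial {n m : ℕ} (t : Fin n → Fin (n + m)) (μ : Equiv.Perm (Fin (n + m))) : Prop :=
  ∀ v, IsPureSink t v ↔ IsPureSource t (μ v)

/-- The successor map of the quotient of a multi-colored subgraph by a matrimonial
partition: each vertex with an outgoing arc is sent to the head of that arc, each pure
sink is welded to (sent to) its paired pure source, and isolated vertices stay put. -/
noncomputable def weldMap {n m : ℕ} (t : Fin n → Fin (n + m))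
    (μ : Equiv.Perm (Fin (n + m))) (v : Fin (n + m)) : Fin (n + m) :=
  if hv : ∃ i : Fin n, t i = v then Fin.castAdd m hv.choose
  else if ∃ i : Fin n, Fin.castAdd m i = v then μ v else v

/-- Number of orbits of a self-map of `Fin N`. -/
noncomputable def orbitCount {N : ℕ} (f : Fin N → Fin N) : ℕ :=
  (Set.range fun v => {w | ∃ a b : ℕ, f^[a] v = f^[b] w}).ncard

/-- Number of isolated vertices of a multi-colored subgraph (vertices that are both a
source and a sink). -/
noncomputable def isolatedCount {n m : ℕ} (t : Fin n → Fin (n + m)) : ℕ :=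
  {v : Fin (n + m) | (¬ ∃ i : Fin n, t i = v) ∧ ∃ j : Fin m, Fin.natAdd n j = v}.ncard

/-- The number of directed cycle graphs in the quotient of a multi-colored subgraph by a
matrimonial partition: every orbit of the weld map, except the (singleton) orbits of the
isolated vertices, yields exactly one cycle graph of the quotient. -/
noncomputable def quotCycleCount {n m : ℕ} (t : Fin n → Fin (n + m))
    (μ : Equiv.Perm (Fin (n + m))) : ℕ :=
  orbitCount (weldMap t μ) - isolatedCount t

/-- `𝔾` has an unbalanced similarity class of multi-colored subgraphs: for some
multi-colored subgraph `(t, c)` and some matrimonial partition `μ` for its class, the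
numbers of odd and of even multi-colored subgraphs in its similarity class (same sink set,
i.e. same `Set.range t`, and same color set `Set.range c`) differ. -/
def HasUnbalancedClass {n m q : ℕ} (g : Fin q → Fin n → ℝ)
    (h : Fin q → Fin (n + m) → ℝ) : Prop :=
  ∃ (t : Fin n → Fin (n + m)) (c : Fin n → Fin q) (μ : Equiv.Perm (Fin (n + m))),
    IsMCS g h t c ∧ IsMatrimonial t μ ∧
    {tc : (Fin n → Fin (n + m)) × (Fin n → Fin q) |
        IsMCS g h tc.1 tc.2 ∧ Set.range tc.1 = Set.range t ∧
        Set.range tc.2 = Set.range c ∧ Odd (quotCycleCount tc.1 μ)}.ncard ≠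
      {tc : (Fin n → Fin (n + m)) × (Fin n → Fin q) |
        IsMCS g h tc.1 tc.2 ∧ Set.range tc.1 = Set.range t ∧
        Set.range tc.2 = Set.range c ∧ Even (quotCycleCount tc.1 μ)}.ncard

/-- Arc set of the directed path graph whose vertices, in order, are the list `l`. -/
def pathArcs {V : Type*} (l : List V) : Set (V × V) :=
  {a | ∃ k : ℕ, l[k]? = some a.1 ∧ l[k + 1]? = some a.2}

/-- Arc set of the directed cycle graph whose vertices, in cyclic order, are the list `l`. -/
def cycleArcs {V : Type*} (l : List V) : Set (V × V) :=
  pathArcs l ∪ {a | ∃ x y, l.getLast? = some x ∧ l.head? = some y ∧ a = (x, y)}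

/-- A cactus graph with vertex set `W`, arc set `E` and root `r`: a trunk (a directed path
graph, possibly a single vertex, starting at `r`) together with any number of buds, each
bud being a directed cycle graph together with a stem arc from a vertex already in the
graph (on the trunk or on the cycle of another bud) to a vertex of the cycle. -/
inductive IsCactus {V : Type*} : Set V → Set (V × V) → V → Prop where
  | trunk (r : V) (l : List V) (hnd : l.Nodup) (hhead : l.head? = some r) :
      IsCactus {v | v ∈ l} (pathArcs l) r
  | bud (r : V) (W : Set V) (E : Set (V × V)) (l : List V) (w u : V)
      (hc : IsCactus W E r) (hnd : l.Nodup) (hne : l ≠ [])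
      (hdisj : ∀ v ∈ l, v ∉ W) (hw : w ∈ W) (hu : u ∈ l) :
      IsCactus (W ∪ {v | v ∈ l}) (E ∪ cycleArcs l ∪ {(w, u)}) r

/-- `𝔾` has a spanning subgraph which is a disjoint union of `m` cactus graphs rooted at
the `m` input vertices `n+1, …, n+m`, respectively. -/
def HasSpanningCacti {n m q : ℕ} (g : Fin q → Fin n → ℝ)
    (h : Fin q → Fin (n + m) → ℝ) : Prop :=
  ∃ (W : Fin m → Set (Fin (n + m))) (F : Fin m → Set (Fin (n + m) × Fin (n + m))),
    (∀ j, IsCactus (W j) (F j) (Fin.natAdd n j)) ∧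
    (∀ j, ∀ a ∈ F j, HasArc g h a.1 a.2) ∧
    Pairwise (fun j j' => Disjoint (W j) (W j')) ∧
    (⋃ j, W j) = Set.univ

/-- Rank of the submatrix `G_S` whose columns are the `g i`, `i ∈ S`. -/
noncomputable def rankCols {q n1 : ℕ} (g : Fin q → Fin n1 → ℝ) (S : Finset (Fin q)) : ℕ :=
  (Matrix.of fun (i : Fin n1) (k : {x // x ∈ S}) => g k.1 i).rank

/-- Rank of the submatrix `H_S` whose rows are the `h i`, `i ∈ S`. -/
noncomputable def rankRows {q n2 : ℕ} (h : Fin q → Fin n2 → ℝ) (S : Finset (Fin q)) : ℕ :=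
  (Matrix.of fun (k : {x // x ∈ S}) (j : Fin n2) => h k.1 j).rank

/-- `I` is a jointly independent index set of `(G, H)`: both `{g i : i ∈ I}` and
`{h i : i ∈ I}` are linearly independent families. -/
def JointlyIndependent {q n1 n2 : ℕ} (g : Fin q → Fin n1 → ℝ) (h : Fin q → Fin n2 → ℝ)
    (I : Finset (Fin q)) : Prop :=
  LinearIndependent ℝ (fun i : {x // x ∈ I} => g i.1) ∧
  LinearIndependent ℝ (fun i : {x // x ∈ I} => h i.1)

/-- Maximum cardinality of a nonempty jointly independent index set of `(G, H)`,
taken to be `0` if none exists. -/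
noncomputable def maxJointIndep {q n1 n2 : ℕ} (g : Fin q → Fin n1 → ℝ)
    (h : Fin q → Fin n2 → ℝ) : ℕ :=
  sSup (insert 0 {c : ℕ | ∃ I : Finset (Fin q), I.Nonempty ∧
    JointlyIndependent g h I ∧ I.card = c})

/-- Arcs of the transfer graph of `{G_𝐪, H_𝐪}`; vertex `0` is `none`, vertex `i ∈ 𝐪`
is `some i`.  There is an arc from `0` to `i` iff `h_{i2} ≠ 0`, and an arc from `j` to `i`
iff the scalar `h_{i1} g_j` is nonzero. -/
def TArc {n m q : ℕ} (g : Fin q → Fin n → ℝ) (h : Fin q → Fin (n + m) → ℝ) :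
    Option (Fin q) → Option (Fin q) → Prop
  | none, some i => ∃ j : Fin m, h i (Fin.natAdd n j) ≠ 0
  | some j, some i => (∑ l : Fin n, h i (Fin.castAdd m l) * g j l) ≠ 0
  | _, none => False

/-- The transfer graph has a spanning tree rooted at vertex `0`: every vertex `1, …, q`
is reachable from vertex `0` by a directed path. -/
def TransferRootedAtZero {n m q : ℕ} (g : Fin q → Fin n → ℝ)
    (h : Fin q → Fin (n + m) → ℝ) : Prop :=
  ∀ i : Fin q, Relation.ReflTransGen (TArc g h) none (some i)



section Stmt8Aux

open Finset Equiv Equiv.Perm Function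

private lemma cb_aux {r k : ℕ} {M : Matrix (Fin r) (Fin k) ℝ} {N : Matrix (Fin k) (Fin r) ℝ}
    {p : Fin r → Fin k} (H : ¬Function.Injective p) :
    (∑ σ : Equiv.Perm (Fin r),
        ((Equiv.Perm.sign σ : ℤ) : ℝ) * ∏ x, M (σ x) (p x) * N (p x) x) = 0 := by
  obtain ⟨i, j, hpij, hij⟩ : ∃ i j, p i = p j ∧ i ≠ j := by
    rw [Function.Injective] at H
    push_neg at H
    obtain ⟨i, j, h1, h2⟩ := H
    exact ⟨i, j, h1, h2⟩
  exact Finset.sum_involution (fun σ _ => σ * Equiv.swap i j)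
    (fun σ _ => by
      have : (∏ x, M (σ x) (p x)) = ∏ x, M ((σ * Equiv.swap i j) x) (p x) :=
        Fintype.prod_equiv (Equiv.swap i j) _ _ (by simp [Equiv.apply_swap_eq_self hpij])
      simp [this, Equiv.Perm.sign_swap hij, -Equiv.Perm.sign_swap', Finset.prod_mul_distrib])
    (fun σ _ _ => (not_congr Equiv.mul_swap_eq_iff).mpr hij) (fun _ _ => Finset.mem_univ _)
    fun σ _ => Equiv.mul_swap_involutive i j σ

private lemma cb_expand {r k : ℕ} (M : Matrix (Fin r) (Fin k) ℝ) (N : Matrix (Fin k) (Fin r) ℝ) :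
    (M * N).det = ∑ f ∈ Finset.univ.filter (fun f : Fin r → Fin k => Function.Injective f),
      (M.submatrix id f).det * ∏ i, N (f i) i :=
  calc (M * N).det
      = ∑ f : Fin r → Fin k, ∑ σ : Equiv.Perm (Fin r),
          ((Equiv.Perm.sign σ : ℤ) : ℝ) * ∏ i, M (σ i) (f i) * N (f i) i := by
        simp only [Matrix.det_apply', Matrix.mul_apply, Finset.prod_univ_sum, Finset.mul_sum,
          Fintype.piFinset_univ]
        rw [Finset.sum_comm]
    _ = ∑ f ∈ Finset.univ.filter (fun f : Fin r → Fin k => Function.Injective f),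
          ∑ σ : Equiv.Perm (Fin r),
          ((Equiv.Perm.sign σ : ℤ) : ℝ) * ∏ i, M (σ i) (f i) * N (f i) i := by
        refine (Finset.sum_subset (Finset.filter_subset _ _) fun f _ hinj => cb_aux ?_).symm
        simpa using hinj
    _ = _ := by
        refine Finset.sum_congr rfl fun f _ => ?_
        rw [Matrix.det_apply', Finset.sum_mul]
        refine Finset.sum_congr rfl fun σ _ => ?_
        rw [Finset.prod_mul_distrib]
        simp [Matrix.submatrix_apply, mul_assoc]

private lemma cb_exists {r k : ℕ} (M : Matrix (Fin r) (Fin k) ℝ) (N : Matrix (Fin k) (Fin r) ℝ)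
    (h : (M * N).det ≠ 0) :
    ∃ e : Fin r → Fin k, Function.Injective e ∧ (M.submatrix id e).det ≠ 0 ∧
      (N.submatrix e id).det ≠ 0 := by
  classical
  rw [cb_expand] at h
  have hmaps : ∀ f ∈ Finset.univ.filter (fun f : Fin r → Fin k => Function.Injective f),
      Finset.image f Finset.univ ∈ Finset.univ.powersetCard r := by
    intro f hf
    rw [Finset.mem_filter] at hf
    rw [Finset.mem_powersetCard]
    exact ⟨Finset.subset_univ _, by
      rw [Finset.card_image_of_injective _ hf.2, Finset.card_univ, Fintype.card_fin]⟩
  rw [← Finset.sum_fiberwise_of_maps_to hmaps] at h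
  obtain ⟨S, hSmem, hS⟩ := Finset.exists_ne_zero_of_sum_ne_zero h
  rw [Finset.mem_powersetCard] at hSmem
  have hcard : S.card = r := hSmem.2
  set e : Fin r → Fin k := fun i => ((S.orderIsoOfFin hcard i : S) : Fin k) with he
  have hei : Function.Injective e := fun a b hab => by
    have := (S.orderIsoOfFin hcard).injective (Subtype.ext hab)
    exact this
  have hmemS : ∀ i, e i ∈ S := fun i => (S.orderIsoOfFin hcard i).2
  have himage : Finset.image e Finset.univ = S := by
    apply Finset.eq_of_subset_of_card_le
    · intro x hx
      obtain ⟨i, _, rfl⟩ := Finset.mem_image.mp hx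
      exact hmemS i
    · rw [Finset.card_image_of_injective _ hei, Finset.card_univ, Fintype.card_fin, hcard]
  -- the fiber over S is in bijection with permutations of `Fin r`
  have hinjf : ∀ f ∈ (Finset.univ.filter
      (fun f : Fin r → Fin k => Function.Injective f)).filter
        (fun f => Finset.image f Finset.univ = S), Function.Injective f := fun f hf => by
    rw [Finset.mem_filter, Finset.mem_filter] at hf
    exact hf.1.2
  have hmemf : ∀ f ∈ (Finset.univ.filter
      (fun f : Fin r → Fin k => Function.Injective f)).filter
        (fun f => Finset.image f Finset.univ = S), ∀ x, f x ∈ S := fun f hf x => by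
    rw [Finset.mem_filter] at hf
    exact hf.2 ▸ Finset.mem_image_of_mem f (Finset.mem_univ x)
  let permOf : ∀ f ∈ (Finset.univ.filter
      (fun f : Fin r → Fin k => Function.Injective f)).filter
        (fun f => Finset.image f Finset.univ = S), Equiv.Perm (Fin r) := fun f hf =>
    Equiv.ofBijective (fun x => (S.orderIsoOfFin hcard).symm ⟨f x, hmemf f hf x⟩)
      (Finite.injective_iff_bijective.mp (fun a b hab =>
        hinjf f hf (congrArg Subtype.val ((S.orderIsoOfFin hcard).symm.injective hab))))
  have hcomp : ∀ f hf, e ∘ (permOf f hf) = f := by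
    intro f hf
    funext x
    simp only [permOf, Function.comp_apply, Equiv.ofBijective_apply, he]
    rw [OrderIso.apply_symm_apply]
  have key : (∑ f ∈ (Finset.univ.filter
        (fun f : Fin r → Fin k => Function.Injective f)).filter
          (fun f => Finset.image f Finset.univ = S),
        (M.submatrix id f).det * ∏ i, N (f i) i)
      = (M.submatrix id e).det * (N.submatrix e id).det := by
    have hstep : (∑ f ∈ (Finset.univ.filter
          (fun f : Fin r → Fin k => Function.Injective f)).filter
            (fun f => Finset.image f Finset.univ = S),
          (M.submatrix id f).det * ∏ i, N (f i) i)
        = ∑ σ : Equiv.Perm (Fin r),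
            (M.submatrix id (e ∘ σ)).det * ∏ i, N ((e ∘ σ) i) i := by
      refine Finset.sum_bij' (i := permOf) (j := fun σ _ => e ∘ σ) ?_ ?_ ?_ ?_ ?_
      · intro f hf; exact Finset.mem_univ _
      · intro σ _
        rw [Finset.mem_filter, Finset.mem_filter]
        refine ⟨⟨Finset.mem_univ _, hei.comp σ.injective⟩, ?_⟩
        rw [show Finset.image (e ∘ σ) Finset.univ = Finset.image e (Finset.image σ Finset.univ)
            from (Finset.image_image).symm]
        rw [Finset.image_univ_equiv]
        exact himage
      · intro f hf
        exact hcomp f hf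
      · intro σ _
        ext x
        simp only [permOf, Equiv.ofBijective_apply, Function.comp_apply]
        rw [show (⟨e (σ x), hmemS (σ x)⟩ : {y // y ∈ S}) = S.orderIsoOfFin hcard (σ x)
            from Subtype.ext rfl, OrderIso.symm_apply_apply]
      · intro f hf
        rw [hcomp f hf]
    rw [hstep]
    have : ∀ σ : Equiv.Perm (Fin r),
        (M.submatrix id (e ∘ σ)).det * ∏ i, N ((e ∘ σ) i) i
        = ((Equiv.Perm.sign σ : ℤ) : ℝ) * ((M.submatrix id e).det
            * ∏ i, (N.submatrix e id) (σ i) i) := by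
      intro σ
      have h1 : M.submatrix id (e ∘ σ) = (M.submatrix id e).submatrix id σ := by
        ext i j; rfl
      rw [h1, Matrix.det_permute']
      ring_nf
      rfl
    rw [Finset.sum_congr rfl fun σ _ => this σ]
    rw [Matrix.det_apply' (N.submatrix e id)]
    rw [Finset.mul_sum]
    refine Finset.sum_congr rfl fun σ _ => by ring
  rw [key] at hS
  exact ⟨e, hei, left_ne_zero_of_mul hS, right_ne_zero_of_mul hS⟩

private lemma colPick {a b : ℕ} (A : Matrix (Fin a) (Fin b) ℝ) {r : ℕ} (hr : A.rank = r) :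
    ∃ f : Fin r → Fin b, LinearIndependent ℝ (fun i => Aᵀ (f i)) := by
  classical
  obtain ⟨s, hsub, hspan, hind⟩ := exists_linearIndependent ℝ (Set.range Aᵀ)
  have hfin : s.Finite := (Set.finite_range Aᵀ).subset hsub
  haveI : Fintype s := hfin.fintype
  have hcard : s.toFinset.card = r := by
    rw [← hr, Matrix.rank_eq_finrank_span_cols]
    change _ = Module.finrank ℝ (Submodule.span ℝ (Set.range Aᵀ))
    rw [← hspan, finrank_span_set_eq_card hind]
  let φ : Fin r ≃ {x // x ∈ s.toFinset} := (finCongr hcard.symm).trans s.toFinset.equivFin.symm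
  have hmem : ∀ i : Fin r, ((φ i : s.toFinset) : Fin a → ℝ) ∈ Set.range Aᵀ := fun i =>
    hsub (Set.mem_toFinset.mp (φ i).2)
  choose f hf using hmem
  refine ⟨f, ?_⟩
  have hψ : Function.Injective (fun i : Fin r => (⟨(φ i : s.toFinset),
      Set.mem_toFinset.mp (φ i).2⟩ : s)) := fun i j hij => by
    apply φ.injective
    apply Subtype.ext
    have := congrArg Subtype.val hij
    simpa using this
  have heq : (fun i => Aᵀ (f i))
      = (fun x : s => (x : Fin a → ℝ)) ∘ (fun i : Fin r => (⟨(φ i : s.toFinset),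
          Set.mem_toFinset.mp (φ i).2⟩ : s)) := by
    funext i
    exact hf i
  rw [heq]
  exact hind.comp _ hψ

private lemma rank_submatrix_rows_le {l m n : Type*} [Fintype l] [Fintype m] [Fintype n]
    (A : Matrix m n ℝ) (f : l → m) : (A.submatrix f id).rank ≤ A.rank := by
  rw [Matrix.rank_eq_finrank_span_row, Matrix.rank_eq_finrank_span_row]
  apply Submodule.finrank_mono
  apply Submodule.span_mono
  rintro x ⟨i, rfl⟩
  exact ⟨f i, rfl⟩

end Stmt8Aux

/-- `rank (G * H)` is at most the maximum cardinality of a jointly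
independent index set of `(G, H)`, and this bound is tighter than
`min {rank G, rank H}`. -/
theorem stmt8 (n1 n2 k : ℕ) (h1 : 1 ≤ n1) (h2 : 1 ≤ n2) (hk : 1 ≤ k)
    (G : Matrix (Fin n1) (Fin k) ℝ) (H : Matrix (Fin k) (Fin n2) ℝ) :
    (G * H).rank ≤ maxJointIndep (fun i r => G r i) (fun i => H i) ∧
      maxJointIndep (fun i r => G r i) (fun i => H i) ≤ min G.rank H.rank := by
  classical
  have hbdd : BddAbove (insert 0 {c : ℕ | ∃ I : Finset (Fin k), I.Nonempty ∧
      JointlyIndependent (fun i r => G r i) (fun i => H i) I ∧ I.card = c}) := by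
    refine ⟨k, fun c hc => ?_⟩
    rcases hc with rfl | ⟨I, _, _, rfl⟩
    · exact Nat.zero_le _
    · exact (Finset.card_le_univ I).trans (by simp)
  constructor
  · -- rank (G * H) ≤ maxJointIndep
    set A := G * H with hA
    obtain ⟨τ, hτ⟩ := colPick A rfl
    have hNrank : ((A.submatrix id τ)ᵀ).rank = A.rank := by
      have hli : LinearIndependent ℝ (fun i => (A.submatrix id τ)ᵀ i) := hτ
      have := hli.rank_matrix
      rw [Fintype.card_fin] at this
      exact this
    obtain ⟨ρ, hρ⟩ := colPick ((A.submatrix id τ)ᵀ) hNrank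
    have hdet : ((G.submatrix ρ id) * (H.submatrix id τ)).det ≠ 0 := by
      have hC : (G.submatrix ρ id) * (H.submatrix id τ) = A.submatrix ρ τ := by
        ext i j
        simp [Matrix.mul_apply, hA]
      rw [hC]
      have hli : LinearIndependent ℝ (fun i => (A.submatrix ρ τ) i) := hρ
      have hu := Matrix.linearIndependent_rows_iff_isUnit.mp hli
      exact ((Matrix.isUnit_iff_isUnit_det _).mp hu).ne_zero
    obtain ⟨e, he_inj, hMe, hNe⟩ := cb_exists _ _ hdet
    have hgind : LinearIndependent ℝ (fun j : Fin A.rank => (fun r => G r (e j))) := by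
      have hu : IsUnit ((G.submatrix ρ id).submatrix id e) :=
        (Matrix.isUnit_iff_isUnit_det _).mpr (isUnit_iff_ne_zero.mpr hMe)
      have hcols : LinearIndependent ℝ
          (fun j => ((G.submatrix ρ id).submatrix id e)ᵀ j) :=
        Matrix.linearIndependent_cols_iff_isUnit.mpr hu
      exact LinearIndependent.of_comp (LinearMap.funLeft ℝ ℝ ρ) hcols
    have hhind : LinearIndependent ℝ (fun j : Fin A.rank => H (e j)) := by
      have hu : IsUnit ((H.submatrix id τ).submatrix e id) :=
        (Matrix.isUnit_iff_isUnit_det _).mpr (isUnit_iff_ne_zero.mpr hNe)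
      have hrows : LinearIndependent ℝ
          (fun j => ((H.submatrix id τ).submatrix e id) j) :=
        Matrix.linearIndependent_rows_iff_isUnit.mpr hu
      exact LinearIndependent.of_comp (LinearMap.funLeft ℝ ℝ τ) hrows
    set I : Finset (Fin k) := Finset.image e Finset.univ with hI
    have hcardI : I.card = A.rank := by
      rw [hI, Finset.card_image_of_injective _ he_inj, Finset.card_univ, Fintype.card_fin]
    rcases Nat.eq_zero_or_pos A.rank with h0 | hpos
    · rw [h0]; exact Nat.zero_le _
    · have hne : I.Nonempty := Finset.card_pos.mp (by rw [hcardI]; exact hpos)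
      have hji : JointlyIndependent (fun i r => G r i) (fun i => H i) I := by
        let ε : Fin A.rank ≃ {x // x ∈ I} := Equiv.ofBijective
          (fun j => ⟨e j, Finset.mem_image_of_mem e (Finset.mem_univ j)⟩)
          ⟨fun a b hab => he_inj (congrArg Subtype.val hab), by
            rintro ⟨x, hx⟩
            obtain ⟨j, _, rfl⟩ := Finset.mem_image.mp hx
            exact ⟨j, rfl⟩⟩
        constructor
        · exact (linearIndependent_equiv ε).mp (show LinearIndependent ℝ
            ((fun i : {x // x ∈ I} => (fun r => G r i.1)) ∘ ⇑ε) from hgind)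
        · exact (linearIndependent_equiv ε).mp (show LinearIndependent ℝ
            ((fun i : {x // x ∈ I} => H i.1) ∘ ⇑ε) from hhind)
      refine le_csSup hbdd ?_
      exact Set.mem_insert_of_mem _ ⟨I, hne, hji, hcardI⟩
  · -- maxJointIndep ≤ min rank
    apply csSup_le ⟨0, Set.mem_insert 0 _⟩
    rintro c (rfl | ⟨I, hne, ⟨hg, hh⟩, rfl⟩)
    · exact Nat.zero_le _
    · refine le_min ?_ ?_
      · have hli : LinearIndependent ℝ
            (fun i : {x // x ∈ I} => (Gᵀ.submatrix (fun i : {x // x ∈ I} => i.1) id) i) := hg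
        have := hli.rank_matrix
        rw [Fintype.card_coe] at this
        rw [← this, ← Matrix.rank_transpose G]
        exact rank_submatrix_rows_le Gᵀ _
      · have hli : LinearIndependent ℝ
            (fun i : {x // x ∈ I} => (H.submatrix (fun i : {x // x ∈ I} => i.1) id) i) := hh
        have := hli.rank_matrix
        rw [Fintype.card_coe] at this
        rw [← this]
        exact rank_submatrix_rows_le H _


end StructCtrl
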